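/- A Boolean relation R ⊆ {0,1}^k is Horn (definable by a CNF formula in which every clause has at most one positive literal) if and only if R is closed under coordinatewise conjunction, i.e., for all m, m' ∈ R, the tuple m ∧ m' (taking AND in each coordinate) is in R. -/

import Mathlib

/-- Satisfaction of a clause with positive literals `P` and negative literals `N`. -/
def clauseSat {k : ℕ} (P N : Finset (Fin k)) (m : Fin k → Bool) : Prop :=
  (∃ i ∈ P, m i = true) ∨ (∃ i ∈ N, m i = false)

/-- `R` is definable by a CNF formula in which every clause has at most one positive literal. -/
def HornDefinable {k : ℕ} (R : Set (Fin k → Bool)) : Prop :=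
  ∃ L : List (Finset (Fin k) × Finset (Fin k)),
    (∀ c ∈ L, c.1.card ≤ 1) ∧
    R = {m | ∀ c ∈ L, clauseSat c.1 c.2 m}

theorem stmt0 {k : ℕ} (R : Set (Fin k → Bool)) :
    HornDefinable R ↔ ∀ m m', m ∈ R → m' ∈ R → (fun i => m i && m' i) ∈ R := by
  classical
  constructor
  · rintro ⟨L, hcard, rfl⟩ m m' hm hm'
    intro c hc
    rcases hm c hc with ⟨i, hi, hmi⟩ | ⟨i, hi, hmi⟩
    · rcases hm' c hc with ⟨j, hj, hmj⟩ | ⟨j, hj, hmj⟩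
      · have hij : i = j := Finset.card_le_one.mp (hcard c hc) i hi j hj
        exact Or.inl ⟨i, hi, by simp [hmi, hij ▸ hmj]⟩
      · exact Or.inr ⟨j, hj, by simp [hmj]⟩
    · exact Or.inr ⟨i, hi, by simp [hmi]⟩
  · intro hclose
    have hinf : ∀ S : Finset (Fin k → Bool), S.Nonempty → (∀ m ∈ S, m ∈ R) →
        (fun i => S.inf (fun m => m i)) ∈ R := by
      intro S
      induction S using Finset.induction_on with
      | empty => intro h; exact absurd rfl h.ne_empty
      | @insert a s ha ih =>
        intro _ hsub
        rcases s.eq_empty_or_nonempty with rfl | hs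
        · have he : (fun i => (insert a (∅ : Finset (Fin k → Bool))).inf (fun m => m i)) = a := by
            funext i; simp
          rw [he]
          exact hsub a (by simp)
        · have h1 : a ∈ R := hsub a (by simp)
          have h2 := ih hs (fun m hm => hsub m (by simp [hm]))
          have h3 := hclose a _ h1 h2
          convert h3 using 1
          funext i
          simp [Finset.inf_insert]
    -- definitions
    set N : (Fin k → Bool) → Finset (Fin k) := fun a => Finset.univ.filter (fun i => a i = true) with hN
    set S : (Fin k → Bool) → Finset (Fin k → Bool) :=
      fun a => Finset.univ.filter (fun m => m ∈ R ∧ ∀ i, a i = true → m i = true) with hS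
    set c : (Fin k → Bool) → (Fin k → Bool) := fun a i => (S a).inf (fun m => m i) with hc
    set cl : (Fin k → Bool) → Finset (Fin k) × Finset (Fin k) :=
      fun a => if h : ∃ j, c a j = true ∧ a j = false then ({h.choose}, N a) else (∅, N a) with hcl
    refine ⟨((Finset.univ.filter (fun a => a ∉ R)).toList).map cl, ?_, ?_⟩
    · intro p hp
      rcases List.mem_map.mp hp with ⟨a, _, rfl⟩
      by_cases h : ∃ j, c a j = true ∧ a j = false <;> simp [hcl, h]
    · ext m
      simp only [Set.mem_setOf_eq, List.mem_map, Finset.mem_toList, Finset.mem_filter,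
        Finset.mem_univ, true_and]
      constructor
      · rintro hm p ⟨a, haR, rfl⟩
        -- show m satisfies clause of a
        by_cases hneg : ∃ i ∈ N a, m i = false
        · by_cases h : ∃ j, c a j = true ∧ a j = false <;> exact Or.inr (by simpa [hcl, h] using hneg)
        · -- m ∈ S a
          push_neg at hneg
          have hmS : m ∈ S a := by
            simp only [hS, Finset.mem_filter, Finset.mem_univ, true_and]
            exact ⟨hm, fun i hi => by simpa using hneg i (by simp [hN, hi])⟩
          have hSsub : ∀ x ∈ S a, x ∈ R := by
            intro x hx
            simp only [hS, Finset.mem_filter] at hx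
            exact hx.2.1
          have hcR : c a ∈ R := hinf (S a) ⟨m, hmS⟩ hSsub
          have hca : ∀ i, a i = true → c a i = true := by
            intro i hi
            have : (true : Bool) ≤ (S a).inf (fun m => m i) := by
              apply Finset.le_inf
              intro x hx
              simp only [hS, Finset.mem_filter] at hx
              simp [hx.2.2 i hi]
            simpa [hc] using (top_le_iff.mp (by simpa using this) : (S a).inf (fun m => m i) = true)
          have hne : c a ≠ a := fun h => haR (h ▸ hcR)
          have hj : ∃ j, c a j = true ∧ a j = false := by
            by_contra hcon
            push_neg at hcon
            apply hne
            funext i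
            cases hi : a i with
            | true => exact hca i hi
            | false =>
              cases hci : c a i with
              | false => rfl
              | true => exact absurd hi (by simpa using hcon i hci)
          have hjc := hj.choose_spec
          refine Or.inl ⟨hj.choose, ?_, ?_⟩
          · simp [hcl, hj]
          · -- m j = true since c a ≤ m
            have hle : (S a).inf (fun x => x hj.choose) ≤ m hj.choose := Finset.inf_le hmS
            have : c a hj.choose ≤ m hj.choose := hle
            rw [hjc.1] at this
            exact top_le_iff.mp (by simpa using this)
      · intro hsat
        by_contra hmR
        have := hsat (cl m) ⟨m, hmR, rfl⟩
        by_cases h : ∃ j, c m j = true ∧ m j = false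
        · rcases this with ⟨i, hi, hmi⟩ | ⟨i, hi, hmi⟩
          · simp only [hcl, dif_pos h, Finset.mem_singleton] at hi
            rw [hi] at hmi
            exact absurd hmi (by simp [h.choose_spec.2])
          · simp only [hcl, dif_pos h, hN, Finset.mem_filter] at hi
            simp [hi.2] at hmi
        · rcases this with ⟨i, hi, hmi⟩ | ⟨i, hi, hmi⟩
          · simp [hcl, dif_neg h] at hi
          · simp only [hcl, dif_neg h, hN, Finset.mem_filter] at hi
            simp [hi.2] at hmi
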